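/- Let S = ℂ[x,y,z] and Q = (x³ + y³ + z³)·(x³ + y³)·(y + z). The S-module of Jacobian syzygies of Q, i.e., the kernel of the S-linear map S³ → S sending (a,b,c) to a·(∂Q/∂x) + b·(∂Q/∂y) + c·(∂Q/∂z), is generated by two elements, which can be chosen with all components homogeneous of degree 3. -/

import Mathlib

open MvPolynomial

set_option maxHeartbeats 4000000
set_option maxRecDepth 100000

noncomputable section EL7Aux

namespace EL7Aux

/-! ### Generic commutative-ring polynomial identities (verified by `ring`). -/

section generic
variable {R : Type*} [CommRing R] (x y z a b c : R)

lemma syz1 : (x^3 + 7*y^3 + 7*y^2*z)*(6*x^5*y + 6*x^5*z + 6*x^2*y^4 + 6*x^2*y^3*z + 3*x^2*y*z^3 + 3*x^2*z^4) + ((-6)*x^2*y + (-7)*x^2*z)*(x^6 + 8*x^3*y^3 + 6*x^3*y^2*z + x^3*z^3 + 7*y^6 + 6*y^5*z + 4*y^3*z^3 + 3*y^2*z^4) + (x^2*z)*(x^6 + 2*x^3*y^3 + 3*x^3*y*z^2 + 4*x^3*z^3 + y^6 + 3*y^4*z^2 + 4*y^3*z^3) = 0 := by ring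

lemma syz2 : (6*x*y^2 + x*y*z + (-4)*x*z^2)*(6*x^5*y + 6*x^5*z + 6*x^2*y^4 + 6*x^2*y^3*z + 3*x^2*y*z^3 + 3*x^2*z^4) + ((-7)*x^3 + (-1)*y^3 + y^2*z + (-4)*y*z^2)*(x^6 + 8*x^3*y^3 + 6*x^3*y^2*z + x^3*z^3 + 7*y^6 + 6*y^5*z + 4*y^3*z^3 + 3*y^2*z^4) + (7*x^3 + 7*y^3 + (-1)*y^2*z + y*z^2 + 3*z^3)*(x^6 + 2*x^3*y^3 + 3*x^3*y*z^2 + 4*x^3*z^3 + y^6 + 3*y^4*z^2 + 4*y^3*z^3) = 0 := by ring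

variable {x y z a b c : R}

lemma keyA (h : a*(6*x^5*y + 6*x^5*z + 6*x^2*y^4 + 6*x^2*y^3*z + 3*x^2*y*z^3 + 3*x^2*z^4) + b*(x^6 + 8*x^3*y^3 + 6*x^3*y^2*z + x^3*z^3 + 7*y^6 + 6*y^5*z + 4*y^3*z^3 + 3*y^2*z^4) + c*(x^6 + 2*x^3*y^3 + 3*x^3*y*z^2 + 4*x^3*z^3 + y^6 + 3*y^4*z^2 + 4*y^3*z^3) = 0) :
    (7*x^4*b + 7*x^4*c + (-7)*x^3*y*a + (-7)*x^3*z*a + 7*x*y^3*b + 7*x*y^3*c + (-7)*x*y^2*z*b + 7*x*z^3*b + (-7)*y^4*a + (-7)*y*z^3*a) * (3*x^8*z^5 - 3*x^5*z^8) = (((x^3 + y^3 + z^3) * (x^3 + y^3)) * (y + z)) * ((-98)*x^6*y^4*b + (-98)*x^6*y^4*c + 98*x^6*y^3*z*b + 98*x^6*y^3*z*c + 98*x^6*y^2*z^2*b + 98*x^6*y^2*z^2*c + (-98)*x^6*y*z^3*b + (-98)*x^6*y*z^3*c + 98*x^6*z^4*b + 98*x^6*z^4*c + (-588)*x^5*y^5*a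 + 1176*x^5*y^3*z^2*a + 441*x^5*z^5*a + (-798)*x^3*y^7*b + (-210)*x^3*y^7*c + 224*x^3*y^6*z*b + 224*x^3*y^6*z*c + 1337*x^3*y^5*z^2*b + (-133)*x^3*y^5*z^2*c + (-287)*x^3*y^4*z^3*b + (-287)*x^3*y^4*z^3*c + 315*x^3*y^3*z^4*b + 903*x^3*y^3*z^4*c + 455*x^3*y^2*z^5*b + (-7)*x^3*y^2*z^5*c + (-28)*x^3*y*z^6*b + (-7)*x^3*y*z^6*c + 42*x^3*z^7*b + 252*x^3*z^7*c + (-672)*x^2*y^8*a + 84*x^2*y^7*z*a + 1134*x^2*y^6*z^2*a + (-462)*x^2*y^5*z^3*a + 168*x^2*y^4*z^4*a + 945*x^2*y^3*z^5*a + (-63)*x^2*y^2*z^6*a + 63*x^2*y*z^7*a + 189*x^2*z^8*a + (-784)*y^10*b + (-112)*y^10*c + 210*y^9*z*b + 126*y^9*z*c + 1197*y^8*z^2*b + (-273)*y^8*z^2*c + (-658)*y^7*z^3*b + (-154)*y^7*z^3*c + 399*y^6*z^4*b + 798*y^6*z^4*c + 966*y^5*z^5*b + (-42)*y^5*z^5*c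 + (-105)*y^4*z^6*b + 21*y^4*z^6*c + 126*y^3*z^7*b + 252*y^3*z^7*c + 189*y^2*z^8*b) := by
  linear_combination (98*x^6*y^5 + (-196)*x^6*y^3*z^2 + (-77)*x^6*z^5 + 210*x^3*y^8 + (-14)*x^3*y^7*z + (-385)*x^3*y^6*z^2 + 126*x^3*y^5*z^3 + (-28)*x^3*y^4*z^4 + (-329)*x^3*y^3*z^5 + 14*x^3*y^2*z^6 + (-14)*x^3*y*z^7 + (-63)*x^3*z^8 + 112*y^11 + (-14)*y^10*z + (-189)*y^9*z^2 + 133*y^8*z^3 + (-35)*y^7*z^4 + (-252)*y^6*z^5 + 21*y^5*z^6 + (-21)*y^4*z^7 + (-63)*y^3*z^8) * h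

lemma keyB (h : a*(6*x^5*y + 6*x^5*z + 6*x^2*y^4 + 6*x^2*y^3*z + 3*x^2*y*z^3 + 3*x^2*z^4) + b*(x^6 + 8*x^3*y^3 + 6*x^3*y^2*z + x^3*z^3 + 7*y^6 + 6*y^5*z + 4*y^3*z^3 + 3*y^2*z^4) + c*(x^6 + 2*x^3*y^3 + 3*x^3*y*z^2 + 4*x^3*z^3 + y^6 + 3*y^4*z^2 + 4*y^3*z^3) = 0) :
    ((-7)*x^3*y*c + (-7)*x^3*z*c + 7*x^2*y*z*a + 7*x^2*z^2*a + (-7)*y^4*c + 7*y^3*z*b + (-7)*y^3*z*c + 7*y^2*z^2*b) * (3*x^8*z^5 - 3*x^5*z^8) = (((x^3 + y^3 + z^3) * (x^3 + y^3)) * (y + z)) * ((-14)*x^5*y^5*b + (-14)*x^5*y^5*c + 14*x^5*y^4*z*b + 14*x^5*y^4*z*c + (-14)*x^5*y^3*z^2*b + (-14)*x^5*y^3*z^2*c + (-14)*x^5*y^2*z^3*b + (-14)*x^5*y^2*z^3*c + 14*x^5*y*z^4*b + 14*x^5*y*z^4*c + (-14)*x^5*z^5*b + (-35)*x^5*z^5*c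 + (-84)*x^4*y^6*a + (-168)*x^4*y^3*z^3*a + (-63)*x^4*z^6*a + (-98)*x^2*y^8*b + (-14)*x^2*y^8*c + 14*x^2*y^7*z*b + 14*x^2*y^7*z*c + (-14)*x^2*y^6*z^2*b + (-56)*x^2*y^6*z^2*c + (-189)*x^2*y^5*z^3*b + (-21)*x^2*y^5*z^3*c + 21*x^2*y^4*z^4*b + 21*x^2*y^4*z^4*c + (-21)*x^2*y^3*z^5*b + (-84)*x^2*y^3*z^5*c + (-63)*x^2*y^2*z^6*b) := by
  linear_combination (14*x^5*y^6 + 28*x^5*y^3*z^3 + 14*x^5*z^6 + 14*x^2*y^9 + 35*x^2*y^6*z^3 + 21*x^2*y^3*z^6) * h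

lemma keyC0 (h : a*(6*x^5*y + 6*x^5*z + 6*x^2*y^4 + 6*x^2*y^3*z + 3*x^2*y*z^3 + 3*x^2*z^4) + b*(x^6 + 8*x^3*y^3 + 6*x^3*y^2*z + x^3*z^3 + 7*y^6 + 6*y^5*z + 4*y^3*z^3 + 3*y^2*z^4) + c*(x^6 + 2*x^3*y^3 + 3*x^3*y*z^2 + 4*x^3*z^3 + y^6 + 3*y^4*z^2 + 4*y^3*z^3) = 0) :
    (-49) * (((x^3 + y^3 + z^3) * (x^3 + y^3)) * (y + z)) * a = (7*x^4*b + 7*x^4*c + (-7)*x^3*y*a + (-7)*x^3*z*a + 7*x*y^3*b + 7*x*y^3*c + (-7)*x*y^2*z*b + 7*x*z^3*b + (-7)*y^4*a + (-7)*y*z^3*a) * (x^3 + 7*y^3 + 7*y^2*z) + ((-7)*x^3*y*c + (-7)*x^3*z*c + 7*x^2*y*z*a + 7*x^2*z^2*a + (-7)*y^4*c + 7*y^3*z*b + (-7)*y^3*z*c + 7*y^2*z^2*b) * (6*x*y^2 + x*y*z + (-4)*x*z^2) := by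
  linear_combination (-7*x) * h

lemma keyC1 (h : a*(6*x^5*y + 6*x^5*z + 6*x^2*y^4 + 6*x^2*y^3*z + 3*x^2*y*z^3 + 3*x^2*z^4) + b*(x^6 + 8*x^3*y^3 + 6*x^3*y^2*z + x^3*z^3 + 7*y^6 + 6*y^5*z + 4*y^3*z^3 + 3*y^2*z^4) + c*(x^6 + 2*x^3*y^3 + 3*x^3*y*z^2 + 4*x^3*z^3 + y^6 + 3*y^4*z^2 + 4*y^3*z^3) = 0) :
    (-49) * (((x^3 + y^3 + z^3) * (x^3 + y^3)) * (y + z)) * b = (7*x^4*b + 7*x^4*c + (-7)*x^3*y*a + (-7)*x^3*z*a + 7*x*y^3*b + 7*x*y^3*c + (-7)*x*y^2*z*b + 7*x*z^3*b + (-7)*y^4*a + (-7)*y*z^3*a) * ((-6)*x^2*y + (-7)*x^2*z) + ((-7)*x^3*y*c + (-7)*x^3*z*c + 7*x^2*y*z*a + 7*x^2*z^2*a + (-7)*y^4*c + 7*y^3*z*b + (-7)*y^3*z*c + 7*y^2*z^2*b) * ((-7)*x^3 + (-1)*y^3 + y^2*z + (-4)*y*z^2) := by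
  linear_combination (-7*y) * h

lemma keyC2 (h : a*(6*x^5*y + 6*x^5*z + 6*x^2*y^4 + 6*x^2*y^3*z + 3*x^2*y*z^3 + 3*x^2*z^4) + b*(x^6 + 8*x^3*y^3 + 6*x^3*y^2*z + x^3*z^3 + 7*y^6 + 6*y^5*z + 4*y^3*z^3 + 3*y^2*z^4) + c*(x^6 + 2*x^3*y^3 + 3*x^3*y*z^2 + 4*x^3*z^3 + y^6 + 3*y^4*z^2 + 4*y^3*z^3) = 0) :
    (-49) * (((x^3 + y^3 + z^3) * (x^3 + y^3)) * (y + z)) * c = (7*x^4*b + 7*x^4*c + (-7)*x^3*y*a + (-7)*x^3*z*a + 7*x*y^3*b + 7*x*y^3*c + (-7)*x*y^2*z*b + 7*x*z^3*b + (-7)*y^4*a + (-7)*y*z^3*a) * (x^2*z) + ((-7)*x^3*y*c + (-7)*x^3*z*c + 7*x^2*y*z*a + 7*x^2*z^2*a + (-7)*y^4*c + 7*y^3*z*b + (-7)*y^3*z*c + 7*y^2*z^2*b) * (7*x^3 + 7*y^3 + (-1)*y^2*z + y*z^2 + 3*z^3) := by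
  linear_combination (-7*z) * h

end generic

/-! ### The polynomial ring `S = ℂ[x,y,z]` and basic facts. -/

abbrev S := MvPolynomial (Fin 3) ℂ

/-- The defining polynomial of the arrangement `EL₇`. -/
def QP : S := (((X 0)^3 + (X 1)^3 + (X 2)^3) * ((X 0)^3 + (X 1)^3)) * ((X 1) + (X 2))

lemma pd0 : pderiv 0 ((((X 0)^3 + (X 1)^3 + (X 2)^3) * ((X 0)^3 + (X 1)^3)) * ((X 1) + (X 2)) : S) = 6*(X 0)^5*(X 1) + 6*(X 0)^5*(X 2) + 6*(X 0)^2*(X 1)^4 + 6*(X 0)^2*(X 1)^3*(X 2) + 3*(X 0)^2*(X 1)*(X 2)^3 + 3*(X 0)^2*(X 2)^4 := by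
  simp only [pderiv_mul, map_add, pderiv_pow, pderiv_X_self,
    pderiv_X_of_ne (by decide : (1:Fin 3) ≠ 0), pderiv_X_of_ne (by decide : (2:Fin 3) ≠ 0)]
  push_cast
  ring

lemma pd1 : pderiv 1 ((((X 0)^3 + (X 1)^3 + (X 2)^3) * ((X 0)^3 + (X 1)^3)) * ((X 1) + (X 2)) : S) = (X 0)^6 + 8*(X 0)^3*(X 1)^3 + 6*(X 0)^3*(X 1)^2*(X 2) + (X 0)^3*(X 2)^3 + 7*(X 1)^6 + 6*(X 1)^5*(X 2) + 4*(X 1)^3*(X 2)^3 + 3*(X 1)^2*(X 2)^4 := by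
  simp only [pderiv_mul, map_add, pderiv_pow, pderiv_X_self,
    pderiv_X_of_ne (by decide : (0:Fin 3) ≠ 1), pderiv_X_of_ne (by decide : (2:Fin 3) ≠ 1)]
  push_cast
  ring

lemma pd2 : pderiv 2 ((((X 0)^3 + (X 1)^3 + (X 2)^3) * ((X 0)^3 + (X 1)^3)) * ((X 1) + (X 2)) : S) = (X 0)^6 + 2*(X 0)^3*(X 1)^3 + 3*(X 0)^3*(X 1)*(X 2)^2 + 4*(X 0)^3*(X 2)^3 + (X 1)^6 + 3*(X 1)^4*(X 2)^2 + 4*(X 1)^3*(X 2)^3 := by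
  simp only [pderiv_mul, map_add, pderiv_pow, pderiv_X_self,
    pderiv_X_of_ne (by decide : (0:Fin 3) ≠ 2), pderiv_X_of_ne (by decide : (1:Fin 3) ≠ 2)]
  push_cast
  ring

/-! ### Primality of the linear forms used in the coprimality certificate. -/

lemma prime_lin (a : ℂ) : Prime (X 0 - C a * X 2 : S) := by
  rw [← MulEquiv.prime_iff (finSuccEquiv ℂ 2).toMulEquiv]
  have h0 : (finSuccEquiv ℂ 2).toMulEquiv (X 0 - C a * X 2) =
      Polynomial.X - Polynomial.C (C a * X 1) := by
    show (finSuccEquiv ℂ 2) (X 0 - C a * X 2) = _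
    rw [map_sub, map_mul, finSuccEquiv_X_zero]
    rw [show (2 : Fin 3) = Fin.succ 1 from rfl, finSuccEquiv_X_succ]
    simp [finSuccEquiv_apply, algebraMap_eq]
  rw [h0]
  exact Polynomial.prime_X_sub_C _

lemma prime_x : Prime (X 0 : S) := by simpa using prime_lin 0

lemma prime_z : Prime (X 2 : S) := by
  have h := prime_x
  rw [← MulEquiv.prime_iff (renameEquiv ℂ (Equiv.swap (0:Fin 3) 2)).toMulEquiv] at h
  have e0 : (renameEquiv ℂ (Equiv.swap (0:Fin 3) 2)).toMulEquiv (X 0 : S) = (X 2 : S) := by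
    show rename (Equiv.swap (0:Fin 3) 2) (X 0 : S) = _
    rw [rename_X, Equiv.swap_apply_left]
  rwa [e0] at h

/-! ### The primitive cube root of unity. -/

def ω : ℂ := (-1 + Real.sqrt 3 * Complex.I) / 2

lemma homega : ω^2 + ω + 1 = 0 := by
  have h3 : ((Real.sqrt 3 : ℝ) : ℂ)^2 = 3 := by
    rw [← Complex.ofReal_pow, Real.sq_sqrt (by norm_num : (0:ℝ) ≤ 3)]
    norm_num
  unfold ω
  linear_combination (Complex.I^2/4) * h3 + (3/4 : ℂ) * Complex.I_sq

lemma homega3 : ω^3 = 1 := by linear_combination (ω - 1) * homega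

/-! ### Non-divisibility of `QP` by the linear forms. -/

lemma not_dvd_of_eval (p q : S) (pt : Fin 3 → ℂ) (h1 : eval pt p = 0)
    (h2 : eval pt q ≠ 0) : ¬ p ∣ q := by
  rintro ⟨t, rfl⟩
  exact h2 (by rw [map_mul, h1, zero_mul])

lemma isRelPrime_of_prime_not_dvd {M : Type*} [CommMonoidWithZero M] [IsCancelMulZero M] {p q : M}
    (hp : Prime p) (h : ¬ p ∣ q) : IsRelPrime q p := by
  intro d hdq hdp
  obtain ⟨t, ht⟩ := hdp
  rcases hp.irreducible.isUnit_or_isUnit ht with h1 | h2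
  · exact h1
  · exfalso
    obtain ⟨u, rfl⟩ := h2
    have hpd : p ∣ d := ⟨(u⁻¹ : Mˣ), by rw [ht, mul_assoc, Units.mul_inv, mul_one]⟩
    exact h (hpd.trans hdq)


/-! ### The cube root of unity inside `S`, coprimality certificate. -/

lemma hCu : ((C ω : S))^2 + C ω + 1 = 0 := by
  have h : (C (ω^2 + ω + 1) : S) = 0 := by rw [homega, map_zero]
  simpa [map_add, map_pow] using h

lemma prime_xz : Prime (X 0 - X 2 : S) := by simpa using prime_lin 1

lemma prime_u1 : Prime (X 0 - C ω * X 2 : S) := prime_lin ω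

lemma prime_u2 : Prime (X 0 - (C ω)^2 * X 2 : S) := by
  rw [← map_pow]; exact prime_lin (ω^2)

lemma QP_ne : ((((X 0) ^ 3 + (X 1) ^ 3 + (X 2) ^ 3) * ((X 0) ^ 3 + (X 1) ^ 3)) * ((X 1) + (X 2)) : S) ≠ 0 := by
  intro h
  have h2 := congrArg (eval ![(0:ℂ),1,0]) h
  simp at h2

lemma nd_x : ¬ (X 0 : S) ∣ ((((X 0) ^ 3 + (X 1) ^ 3 + (X 2) ^ 3) * ((X 0) ^ 3 + (X 1) ^ 3)) * ((X 1) + (X 2))) :=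
  not_dvd_of_eval _ _ ![0,1,0] (by simp) (by simp)

lemma nd_z : ¬ (X 2 : S) ∣ ((((X 0) ^ 3 + (X 1) ^ 3 + (X 2) ^ 3) * ((X 0) ^ 3 + (X 1) ^ 3)) * ((X 1) + (X 2))) :=
  not_dvd_of_eval _ _ ![1,1,0] (by simp) (by simp)

lemma nd_xz : ¬ (X 0 - X 2 : S) ∣ ((((X 0) ^ 3 + (X 1) ^ 3 + (X 2) ^ 3) * ((X 0) ^ 3 + (X 1) ^ 3)) * ((X 1) + (X 2))) :=
  not_dvd_of_eval _ _ ![1,2,1] (by simp) (by simp; norm_num)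

lemma nd_u1 : ¬ (X 0 - C ω * X 2 : S) ∣ ((((X 0) ^ 3 + (X 1) ^ 3 + (X 2) ^ 3) * ((X 0) ^ 3 + (X 1) ^ 3)) * ((X 1) + (X 2))) :=
  not_dvd_of_eval _ _ ![ω,2,1] (by simp) (by simp [homega3]; norm_num)

lemma nd_u2 : ¬ (X 0 - (C ω)^2 * X 2 : S) ∣ ((((X 0) ^ 3 + (X 1) ^ 3 + (X 2) ^ 3) * ((X 0) ^ 3 + (X 1) ^ 3)) * ((X 1) + (X 2))) :=
  not_dvd_of_eval _ _ ![ω^2,2,1] (by simp)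
    (by
      have h6 : (ω^2)^3 = 1 := by rw [← pow_mul, show 2*3 = 3*2 from rfl, pow_mul, homega3, one_pow]
      simp [h6]; norm_num)

lemma unit3 : IsUnit (3 : S) := by
  rw [← map_ofNat (C : ℂ →+* S) 3]
  exact (isUnit_iff_ne_zero.mpr (by norm_num : (3:ℂ) ≠ 0)).map C

lemma hfac : (3*(X 0)^8*(X 2)^5 - 3*(X 0)^5*(X 2)^8 : S) =
    (3:S) * ((X 0)^5 * ((X 2)^5 * ((X 0 - X 2) *
      ((X 0 - C ω * X 2) * (X 0 - (C ω)^2 * X 2))))) := by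
  linear_combination ((X 0:S)^5*(X 2)^5*(X 0 - X 2)*(3*(X 2)^2*(C ω - 1) - 3*(X 0)*(X 2))
    + 6*(X 0:S)^5*(X 2)^6*((X 0)^2 - (X 0)*(X 2)*(C ω) + (X 2)^2*(C ω - 1))) * hCu

lemma hrel : IsRelPrime ((((X 0) ^ 3 + (X 1) ^ 3 + (X 2) ^ 3) * ((X 0) ^ 3 + (X 1) ^ 3)) * ((X 1) + (X 2)) : S) (3*(X 0)^8*(X 2)^5 - 3*(X 0)^5*(X 2)^8) := by
  rw [hfac]
  refine IsRelPrime.mul_right (unit3.isRelPrime_right) ?_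
  refine IsRelPrime.mul_right ((isRelPrime_of_prime_not_dvd prime_x nd_x).pow_right) ?_
  refine IsRelPrime.mul_right ((isRelPrime_of_prime_not_dvd prime_z nd_z).pow_right) ?_
  refine IsRelPrime.mul_right (isRelPrime_of_prime_not_dvd prime_xz nd_xz) ?_
  exact IsRelPrime.mul_right (isRelPrime_of_prime_not_dvd prime_u1 nd_u1)
    (isRelPrime_of_prime_not_dvd prime_u2 nd_u2)

/-! ### Homogeneity of the two syzygies. -/

lemma homnum (n : ℕ) [n.AtLeastTwo] : (OfNat.ofNat n : S).IsHomogeneous 0 := by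
  rw [← map_ofNat (C : ℂ →+* S) n]; exact isHomogeneous_C _ _

lemma hom_r10 : ((X 0)^3 + 7*(X 1)^3 + 7*(X 1)^2*(X 2) : S).IsHomogeneous 3 := by
  refine ((isHomogeneous_X_pow 0 3).add ?_).add ?_
  · simpa using (homnum 7).mul (isHomogeneous_X_pow 1 3)
  · simpa using ((homnum 7).mul (isHomogeneous_X_pow 1 2)).mul (isHomogeneous_X ℂ 2)

lemma hom_r11 : ((-6)*(X 0)^2*(X 1) + (-7)*(X 0)^2*(X 2) : S).IsHomogeneous 3 := by
  refine IsHomogeneous.add ?_ ?_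
  · simpa using (((homnum 6).mul (isHomogeneous_X_pow 0 2)).mul (isHomogeneous_X ℂ 1)).neg
  · simpa using (((homnum 7).mul (isHomogeneous_X_pow 0 2)).mul (isHomogeneous_X ℂ 2)).neg

lemma hom_r12 : ((X 0)^2*(X 2) : S).IsHomogeneous 3 := by
  simpa using (isHomogeneous_X_pow 0 2).mul (isHomogeneous_X ℂ 2)

lemma hom_r20 : (6*(X 0)*(X 1)^2 + (X 0)*(X 1)*(X 2) + (-4)*(X 0)*(X 2)^2 : S).IsHomogeneous 3 := by
  refine IsHomogeneous.add (IsHomogeneous.add ?_ ?_) ?_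
  · simpa using ((homnum 6).mul (isHomogeneous_X ℂ 0)).mul (isHomogeneous_X_pow 1 2)
  · simpa using ((isHomogeneous_X ℂ 0).mul (isHomogeneous_X ℂ 1)).mul (isHomogeneous_X ℂ 2)
  · simpa using (((homnum 4).mul (isHomogeneous_X ℂ 0)).mul (isHomogeneous_X_pow 2 2)).neg

lemma hom_r21 : ((-7)*(X 0)^3 + (-1)*(X 1)^3 + (X 1)^2*(X 2) + (-4)*(X 1)*(X 2)^2 : S).IsHomogeneous 3 := by
  refine IsHomogeneous.add (IsHomogeneous.add (IsHomogeneous.add ?_ ?_) ?_) ?_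
  · simpa using ((homnum 7).mul (isHomogeneous_X_pow 0 3)).neg
  · simpa using ((isHomogeneous_X_pow 1 3).mul (isHomogeneous_one (σ := Fin 3) (R := ℂ))).neg
  · simpa using (isHomogeneous_X_pow 1 2).mul (isHomogeneous_X ℂ 2)
  · simpa using (((homnum 4).mul (isHomogeneous_X ℂ 1)).mul (isHomogeneous_X_pow 2 2)).neg

lemma hom_r22 : (7*(X 0)^3 + 7*(X 1)^3 + (-1)*(X 1)^2*(X 2) + (X 1)*(X 2)^2 + 3*(X 2)^3 : S).IsHomogeneous 3 := by
  refine IsHomogeneous.add (IsHomogeneous.add (IsHomogeneous.add (IsHomogeneous.add ?_ ?_) ?_) ?_) ?_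
  · simpa using (homnum 7).mul (isHomogeneous_X_pow 0 3)
  · simpa using (homnum 7).mul (isHomogeneous_X_pow 1 3)
  · simpa using ((isHomogeneous_X_pow 1 2).mul (isHomogeneous_X ℂ 2)).neg
  · simpa using (isHomogeneous_X ℂ 1).mul (isHomogeneous_X_pow 2 2)
  · simpa using (homnum 3).mul (isHomogeneous_X_pow 2 3)

lemma hk49 : (C (-(1/49) : ℂ) : S) * (-49 : S) = 1 := by
  rw [show ((-49 : S)) = C (-49 : ℂ) by rw [map_neg, map_ofNat], ← map_mul]
  norm_num


end EL7Aux

end EL7Aux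


open EL7Aux in
/-- The Jacobian syzygy module of the defining polynomial of `EL₇` is generated by
two syzygies with homogeneous components of degree 3. -/
theorem syzygy_module_EL7_free :
    ∃ r₁ r₂ : Fin 3 → MvPolynomial (Fin 3) ℂ,
      (∀ i, (r₁ i).IsHomogeneous 3) ∧ (∀ i, (r₂ i).IsHomogeneous 3) ∧
      ∀ v : Fin 3 → MvPolynomial (Fin 3) ℂ,
        (v 0 * pderiv 0 ((((X 0) ^ 3 + (X 1) ^ 3 + (X 2) ^ 3) * ((X 0) ^ 3 + (X 1) ^ 3))
            * ((X 1) + (X 2)))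
          + v 1 * pderiv 1 ((((X 0) ^ 3 + (X 1) ^ 3 + (X 2) ^ 3) * ((X 0) ^ 3 + (X 1) ^ 3))
            * ((X 1) + (X 2)))
          + v 2 * pderiv 2 ((((X 0) ^ 3 + (X 1) ^ 3 + (X 2) ^ 3) * ((X 0) ^ 3 + (X 1) ^ 3))
            * ((X 1) + (X 2))) = 0) ↔
        v ∈ Submodule.span (MvPolynomial (Fin 3) ℂ) {r₁, r₂} := by
  refine ⟨![(X 0)^3 + 7*(X 1)^3 + 7*(X 1)^2*(X 2), (-6)*(X 0)^2*(X 1) + (-7)*(X 0)^2*(X 2), (X 0)^2*(X 2)],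
          ![6*(X 0)*(X 1)^2 + (X 0)*(X 1)*(X 2) + (-4)*(X 0)*(X 2)^2, (-7)*(X 0)^3 + (-1)*(X 1)^3 + (X 1)^2*(X 2) + (-4)*(X 1)*(X 2)^2, 7*(X 0)^3 + 7*(X 1)^3 + (-1)*(X 1)^2*(X 2) + (X 1)*(X 2)^2 + 3*(X 2)^3], ?_, ?_, ?_⟩
  · intro i
    fin_cases i
    · exact hom_r10
    · exact hom_r11
    · exact hom_r12
  · intro i
    fin_cases i
    · exact hom_r20
    · exact hom_r21
    · exact hom_r22
  · intro v
    rw [pd0, pd1, pd2]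
    constructor
    · intro hv
      obtain ⟨A, hA⟩ : ((((X 0) ^ 3 + (X 1) ^ 3 + (X 2) ^ 3) * ((X 0) ^ 3 + (X 1) ^ 3)) * ((X 1) + (X 2)) : S) ∣ (7*(X 0)^4*(v 1) + 7*(X 0)^4*(v 2) + (-7)*(X 0)^3*(X 1)*(v 0) + (-7)*(X 0)^3*(X 2)*(v 0) + 7*(X 0)*(X 1)^3*(v 1) + 7*(X 0)*(X 1)^3*(v 2) + (-7)*(X 0)*(X 1)^2*(X 2)*(v 1) + 7*(X 0)*(X 2)^3*(v 1) + (-7)*(X 1)^4*(v 0) + (-7)*(X 1)*(X 2)^3*(v 0)) :=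
        hrel.dvd_of_dvd_mul_right ⟨((-98)*(X 0)^6*(X 1)^4*(v 1) + (-98)*(X 0)^6*(X 1)^4*(v 2) + 98*(X 0)^6*(X 1)^3*(X 2)*(v 1) + 98*(X 0)^6*(X 1)^3*(X 2)*(v 2) + 98*(X 0)^6*(X 1)^2*(X 2)^2*(v 1) + 98*(X 0)^6*(X 1)^2*(X 2)^2*(v 2) + (-98)*(X 0)^6*(X 1)*(X 2)^3*(v 1) + (-98)*(X 0)^6*(X 1)*(X 2)^3*(v 2) + 98*(X 0)^6*(X 2)^4*(v 1) + 98*(X 0)^6*(X 2)^4*(v 2) + (-588)*(X 0)^5*(X 1)^5*(v 0) + 1176*(X 0)^5*(X 1)^3*(X 2)^2*(v 0) + 441*(X 0)^5*(X 2)^5*(v 0) + (-798)*(X 0)^3*(X 1)^7*(v 1) + (-210)*(X 0)^3*(X 1)^7*(v 2) + 224*(X 0)^3*(X 1)^6*(X 2)*(v 1) + 224*(X 0)^3*(X 1)^6*(X 2)*(v 2) + 1337*(X 0)^3*(X 1)^5*(X 2)^2*(v 1) + (-133)*(X 0)^3*(X 1)^5*(X 2)^2*(v 2) + (-287)*(X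 0)^3*(X 1)^4*(X 2)^3*(v 1) + (-287)*(X 0)^3*(X 1)^4*(X 2)^3*(v 2) + 315*(X 0)^3*(X 1)^3*(X 2)^4*(v 1) + 903*(X 0)^3*(X 1)^3*(X 2)^4*(v 2) + 455*(X 0)^3*(X 1)^2*(X 2)^5*(v 1) + (-7)*(X 0)^3*(X 1)^2*(X 2)^5*(v 2) + (-28)*(X 0)^3*(X 1)*(X 2)^6*(v 1) + (-7)*(X 0)^3*(X 1)*(X 2)^6*(v 2) + 42*(X 0)^3*(X 2)^7*(v 1) + 252*(X 0)^3*(X 2)^7*(v 2) + (-672)*(X 0)^2*(X 1)^8*(v 0) + 84*(X 0)^2*(X 1)^7*(X 2)*(v 0) + 1134*(X 0)^2*(X 1)^6*(X 2)^2*(v 0) + (-462)*(X 0)^2*(X 1)^5*(X 2)^3*(v 0) + 168*(X 0)^2*(X 1)^4*(X 2)^4*(v 0) + 945*(X 0)^2*(X 1)^3*(X 2)^5*(v 0) + (-63)*(X 0)^2*(X 1)^2*(X 2)^6*(v 0) + 63*(X 0)^2*(X 1)*(X 2)^7*(v 0) + 189*(X 0)^2*(X 2)^8*(v 0) + (-784)*(X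 1)^10*(v 1) + (-112)*(X 1)^10*(v 2) + 210*(X 1)^9*(X 2)*(v 1) + 126*(X 1)^9*(X 2)*(v 2) + 1197*(X 1)^8*(X 2)^2*(v 1) + (-273)*(X 1)^8*(X 2)^2*(v 2) + (-658)*(X 1)^7*(X 2)^3*(v 1) + (-154)*(X 1)^7*(X 2)^3*(v 2) + 399*(X 1)^6*(X 2)^4*(v 1) + 798*(X 1)^6*(X 2)^4*(v 2) + 966*(X 1)^5*(X 2)^5*(v 1) + (-42)*(X 1)^5*(X 2)^5*(v 2) + (-105)*(X 1)^4*(X 2)^6*(v 1) + 21*(X 1)^4*(X 2)^6*(v 2) + 126*(X 1)^3*(X 2)^7*(v 1) + 252*(X 1)^3*(X 2)^7*(v 2) + 189*(X 1)^2*(X 2)^8*(v 1)), keyA hv⟩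
      obtain ⟨B, hB⟩ : ((((X 0) ^ 3 + (X 1) ^ 3 + (X 2) ^ 3) * ((X 0) ^ 3 + (X 1) ^ 3)) * ((X 1) + (X 2)) : S) ∣ ((-7)*(X 0)^3*(X 1)*(v 2) + (-7)*(X 0)^3*(X 2)*(v 2) + 7*(X 0)^2*(X 1)*(X 2)*(v 0) + 7*(X 0)^2*(X 2)^2*(v 0) + (-7)*(X 1)^4*(v 2) + 7*(X 1)^3*(X 2)*(v 1) + (-7)*(X 1)^3*(X 2)*(v 2) + 7*(X 1)^2*(X 2)^2*(v 1)) :=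
        hrel.dvd_of_dvd_mul_right ⟨((-14)*(X 0)^5*(X 1)^5*(v 1) + (-14)*(X 0)^5*(X 1)^5*(v 2) + 14*(X 0)^5*(X 1)^4*(X 2)*(v 1) + 14*(X 0)^5*(X 1)^4*(X 2)*(v 2) + (-14)*(X 0)^5*(X 1)^3*(X 2)^2*(v 1) + (-14)*(X 0)^5*(X 1)^3*(X 2)^2*(v 2) + (-14)*(X 0)^5*(X 1)^2*(X 2)^3*(v 1) + (-14)*(X 0)^5*(X 1)^2*(X 2)^3*(v 2) + 14*(X 0)^5*(X 1)*(X 2)^4*(v 1) + 14*(X 0)^5*(X 1)*(X 2)^4*(v 2) + (-14)*(X 0)^5*(X 2)^5*(v 1) + (-35)*(X 0)^5*(X 2)^5*(v 2) + (-84)*(X 0)^4*(X 1)^6*(v 0) + (-168)*(X 0)^4*(X 1)^3*(X 2)^3*(v 0) + (-63)*(X 0)^4*(X 2)^6*(v 0) + (-98)*(X 0)^2*(X 1)^8*(v 1) + (-14)*(X 0)^2*(X 1)^8*(v 2) + 14*(X 0)^2*(X 1)^7*(X 2)*(v 1) + 14*(X 0)^2*(X 1)^7*(X 2)*(v 2)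 + (-14)*(X 0)^2*(X 1)^6*(X 2)^2*(v 1) + (-56)*(X 0)^2*(X 1)^6*(X 2)^2*(v 2) + (-189)*(X 0)^2*(X 1)^5*(X 2)^3*(v 1) + (-21)*(X 0)^2*(X 1)^5*(X 2)^3*(v 2) + 21*(X 0)^2*(X 1)^4*(X 2)^4*(v 1) + 21*(X 0)^2*(X 1)^4*(X 2)^4*(v 2) + (-21)*(X 0)^2*(X 1)^3*(X 2)^5*(v 1) + (-84)*(X 0)^2*(X 1)^3*(X 2)^5*(v 2) + (-63)*(X 0)^2*(X 1)^2*(X 2)^6*(v 1)), keyB hv⟩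
      have hc0 : (-49 : S) * v 0 = A * ((X 0)^3 + 7*(X 1)^3 + 7*(X 1)^2*(X 2)) + B * (6*(X 0)*(X 1)^2 + (X 0)*(X 1)*(X 2) + (-4)*(X 0)*(X 2)^2) := by
        apply mul_left_cancel₀ QP_ne
        linear_combination keyC0 hv + ((X 0)^3 + 7*(X 1)^3 + 7*(X 1)^2*(X 2)) * hA + (6*(X 0)*(X 1)^2 + (X 0)*(X 1)*(X 2) + (-4)*(X 0)*(X 2)^2) * hB
      have hc1 : (-49 : S) * v 1 = A * ((-6)*(X 0)^2*(X 1) + (-7)*(X 0)^2*(X 2)) + B * ((-7)*(X 0)^3 + (-1)*(X 1)^3 + (X 1)^2*(X 2) + (-4)*(X 1)*(X 2)^2) := by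
        apply mul_left_cancel₀ QP_ne
        linear_combination keyC1 hv + ((-6)*(X 0)^2*(X 1) + (-7)*(X 0)^2*(X 2)) * hA + ((-7)*(X 0)^3 + (-1)*(X 1)^3 + (X 1)^2*(X 2) + (-4)*(X 1)*(X 2)^2) * hB
      have hc2 : (-49 : S) * v 2 = A * ((X 0)^2*(X 2)) + B * (7*(X 0)^3 + 7*(X 1)^3 + (-1)*(X 1)^2*(X 2) + (X 1)*(X 2)^2 + 3*(X 2)^3) := by
        apply mul_left_cancel₀ QP_ne
        linear_combination keyC2 hv + ((X 0)^2*(X 2)) * hA + (7*(X 0)^3 + 7*(X 1)^3 + (-1)*(X 1)^2*(X 2) + (X 1)*(X 2)^2 + 3*(X 2)^3) * hB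
      rw [Submodule.mem_span_pair]
      refine ⟨C (-(1/49) : ℂ) * A, C (-(1/49) : ℂ) * B, ?_⟩
      funext i
      fin_cases i
      · show C (-(1/49) : ℂ) * A * ((X 0)^3 + 7*(X 1)^3 + 7*(X 1)^2*(X 2)) + C (-(1/49) : ℂ) * B * (6*(X 0)*(X 1)^2 + (X 0)*(X 1)*(X 2) + (-4)*(X 0)*(X 2)^2) = v 0
        linear_combination (-(C (-(1/49) : ℂ))) * hc0 + (v 0) * hk49
      · show C (-(1/49) : ℂ) * A * ((-6)*(X 0)^2*(X 1) + (-7)*(X 0)^2*(X 2)) + C (-(1/49) : ℂ) * B * ((-7)*(X 0)^3 + (-1)*(X 1)^3 + (X 1)^2*(X 2) + (-4)*(X 1)*(X 2)^2) = v 1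
        linear_combination (-(C (-(1/49) : ℂ))) * hc1 + (v 1) * hk49
      · show C (-(1/49) : ℂ) * A * ((X 0)^2*(X 2)) + C (-(1/49) : ℂ) * B * (7*(X 0)^3 + 7*(X 1)^3 + (-1)*(X 1)^2*(X 2) + (X 1)*(X 2)^2 + 3*(X 2)^3) = v 2
        linear_combination (-(C (-(1/49) : ℂ))) * hc2 + (v 2) * hk49
    · intro hm
      rw [Submodule.mem_span_pair] at hm
      obtain ⟨m, n, hmn⟩ := hm
      have h0 : v 0 = m * ((X 0)^3 + 7*(X 1)^3 + 7*(X 1)^2*(X 2)) + n * (6*(X 0)*(X 1)^2 + (X 0)*(X 1)*(X 2) + (-4)*(X 0)*(X 2)^2) := by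
        rw [← hmn]; simp
      have h1 : v 1 = m * ((-6)*(X 0)^2*(X 1) + (-7)*(X 0)^2*(X 2)) + n * ((-7)*(X 0)^3 + (-1)*(X 1)^3 + (X 1)^2*(X 2) + (-4)*(X 1)*(X 2)^2) := by
        rw [← hmn]; simp
      have h2 : v 2 = m * ((X 0)^2*(X 2)) + n * (7*(X 0)^3 + 7*(X 1)^3 + (-1)*(X 1)^2*(X 2) + (X 1)*(X 2)^2 + 3*(X 2)^3) := by
        rw [← hmn]; simp [Matrix.cons_val_two, Matrix.vecTail, Matrix.vecHead]
      rw [h0, h1, h2]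
      linear_combination m * syz1 (X 0 : S) (X 1) (X 2) + n * syz2 (X 0 : S) (X 1) (X 2)
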